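/- Let γ ∈ (0,1/2), and let A and B be n×n matrices over a field that are both (γn, γn)-rigid. Then the Kronecker product A ⊗ B is (γ²n², γ²n², γ²)-rigid. -/

import Mathlib

open Kronecker

/-- A matrix `A` is `(k, h, c)`-rigid if for every set `U` of `k` rows and every set `W` of
fewer than `h` columns, the submatrix on rows `U` and columns outside `W` has rank at
least `⌈c·k⌉`; `(k,h)`-rigid means `(k,h,1)`-rigid. -/
def Rigid {F : Type*} [Field F] {ι κ : Type*} [Fintype ι] [Fintype κ]
    [DecidableEq ι] [DecidableEq κ] (A : Matrix ι κ F) (k h : ℕ) (c : ℝ) : Prop :=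
  ∀ U : Finset ι, U.card = k → ∀ W : Finset κ, W.card < h →
    ⌈c * (k : ℝ)⌉₊ ≤ (A.submatrix (fun i : ↥U => (i : ι)) (fun j : ↥(Wᶜ) => (j : κ))).rank

open Finset

lemma top_sum {ι : Type*} [DecidableEq ι] (f : ι → ℕ) :
    ∀ (t : ℕ) (s : Finset ι), t ≤ s.card →
    ∃ S ⊆ s, S.card = t ∧ t * ∑ i ∈ s, f i ≤ s.card * ∑ i ∈ S, f i := by
  intro t
  induction t with
  | zero => intro s _; exact ⟨∅, empty_subset _, card_empty, by simp⟩
  | succ t ih =>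
    intro s hts
    have hne : s.Nonempty := card_pos.mp (by omega)
    obtain ⟨i₀, hi₀s, hi₀max⟩ := s.exists_max_image f hne
    obtain ⟨S', hS's, hS'card, hS'⟩ := ih (s.erase i₀)
      (by rw [card_erase_of_mem hi₀s]; omega)
    have hi₀S' : i₀ ∉ S' := fun h => (mem_erase.mp (hS's h)).1 rfl
    refine ⟨insert i₀ S', ?_, ?_, ?_⟩
    · exact insert_subset hi₀s (hS's.trans (erase_subset _ _))
    · rw [card_insert_of_notMem hi₀S', hS'card]
    · have h1 : ∑ i ∈ s, f i = f i₀ + ∑ i ∈ s.erase i₀, f i :=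
        (Finset.add_sum_erase s f hi₀s).symm
      have h2 : ∑ i ∈ s.erase i₀ \ S', f i + ∑ i ∈ S', f i = ∑ i ∈ s.erase i₀, f i :=
        Finset.sum_sdiff hS's
      have h3 : ∑ i ∈ s.erase i₀ \ S', f i ≤ (s.erase i₀ \ S').card * f i₀ := by
        calc ∑ i ∈ s.erase i₀ \ S', f i ≤ ∑ _i ∈ s.erase i₀ \ S', f i₀ := by
              apply Finset.sum_le_sum
              intro i hi
              exact hi₀max i (erase_subset _ _ (sdiff_subset hi))
          _ = (s.erase i₀ \ S').card * f i₀ := by rw [sum_const, smul_eq_mul]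
      have h4 : (s.erase i₀ \ S').card = s.card - 1 - t := by
        rw [card_sdiff_of_subset hS's, card_erase_of_mem hi₀s, hS'card]
      rw [sum_insert hi₀S', card_erase_of_mem hi₀s] at *
      obtain ⟨e, he⟩ : ∃ e, s.card = t + 1 + e := ⟨s.card - (t+1), by omega⟩
      rw [h4, he, show t + 1 + e - 1 - t = e from by omega] at h3
      rw [he, show t + 1 + e - 1 = t + e from by omega, ← h2] at hS'
      rw [h1, ← h2, he]
      set a := ∑ i ∈ S', f i
      set b := ∑ i ∈ s.erase i₀ \ S', f i
      nlinarith [hS', h3]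

lemma select2d{n : ℕ} (U : Finset (Fin n × Fin n)) (t : ℕ) (ht : t ≤ n) :
    ∃ S J : Finset (Fin n), S.card = t ∧ J.card = t ∧
      t * t * U.card ≤ n * n * (U.filter (fun p => p.1 ∈ S ∧ p.2 ∈ J)).card := by
  classical
  have hcu : (univ : Finset (Fin n)).card = n := by simp
  -- first coordinate
  obtain ⟨S, hSu, hScard, hS⟩ := top_sum (fun i : Fin n => (U.filter (fun p => p.1 = i)).card) t univ
    (by rw [hcu]; exact ht)
  have hsum1 : ∑ i ∈ univ, (U.filter (fun p => p.1 = i)).card = U.card :=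
    (card_eq_sum_card_fiberwise (fun x _ => mem_univ x.1)).symm
  have hsum2 : ∑ i ∈ S, (U.filter (fun p => p.1 = i)).card
      = (U.filter (fun p => p.1 ∈ S)).card := by
    rw [card_eq_sum_card_fiberwise (f := Prod.fst) (s := U.filter (fun p => p.1 ∈ S)) (t := S)
      (fun x hx => (mem_filter.mp hx).2)]
    apply sum_congr rfl
    intro i hi
    congr 1
    ext p
    simp only [mem_filter, and_assoc, and_congr_right_iff]
    intro _
    constructor
    · rintro h; exact ⟨h ▸ hi, h⟩
    · rintro ⟨_, h⟩; exact h
  rw [hcu, hsum1, hsum2] at hS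
  -- second coordinate
  obtain ⟨J, hJu, hJcard, hJ⟩ := top_sum
    (fun j : Fin n => ((U.filter (fun p => p.1 ∈ S)).filter (fun p => p.2 = j)).card) t univ
    (by rw [hcu]; exact ht)
  have hsum3 : ∑ j ∈ univ, ((U.filter (fun p => p.1 ∈ S)).filter (fun p => p.2 = j)).card
      = (U.filter (fun p => p.1 ∈ S)).card :=
    (card_eq_sum_card_fiberwise (fun x _ => mem_univ x.2)).symm
  have hsum4 : ∑ j ∈ J, ((U.filter (fun p => p.1 ∈ S)).filter (fun p => p.2 = j)).card
      = (U.filter (fun p => p.1 ∈ S ∧ p.2 ∈ J)).card := by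
    rw [card_eq_sum_card_fiberwise (f := Prod.snd) (t := J)
      (fun x hx => (mem_filter.mp hx).2.2)]
    apply sum_congr rfl
    intro j hj
    congr 1
    ext p
    simp only [mem_filter, and_assoc, and_congr_right_iff]
    intro _ _
    constructor
    · rintro h; exact ⟨h ▸ hj, h⟩
    · rintro ⟨_, h⟩; exact h
  rw [hcu, hsum3, hsum4] at hJ
  refine ⟨S, J, hScard, hJcard, ?_⟩
  calc t * t * U.card = t * (t * U.card) := by ring
    _ ≤ t * (n * (U.filter (fun p => p.1 ∈ S)).card) := Nat.mul_le_mul_left _ hS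
    _ = n * (t * (U.filter (fun p => p.1 ∈ S)).card) := by ring
    _ ≤ n * (n * (U.filter (fun p => p.1 ∈ S ∧ p.2 ∈ J)).card) := Nat.mul_le_mul_left _ hJ
    _ = n * n * (U.filter (fun p => p.1 ∈ S ∧ p.2 ∈ J)).card := by ring

lemma rigid_rows_indep{F : Type*} [Field F] {n : ℕ} (B : Matrix (Fin n) (Fin n) F) {t : ℕ}
    (hB : Rigid B t t 1) (ht : t ≤ n) (J : Finset (Fin n)) (hJ : J.card ≤ t)
    (W' : Finset (Fin n)) (hW' : W'.card < t) :
    LinearIndependent F (fun j : ↥J => fun d : ↥(W'ᶜ) => B ↑j ↑d) := by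
  classical
  obtain ⟨J₂, hJJ₂, -, hJ₂card⟩ :=
    Finset.exists_subsuperset_card_eq (Finset.subset_univ J) hJ (by simpa using ht)
  have hrk := hB J₂ hJ₂card W' hW'
  rw [one_mul, Nat.ceil_natCast] at hrk
  set M := B.submatrix (fun i : ↥J₂ => (i : Fin n)) (fun j : ↥(W'ᶜ) => (j : Fin n)) with hM
  have hcard : Fintype.card ↥J₂ = t := by simp [hJ₂card]
  have h1 : LinearIndependent F M := by
    apply linearIndependent_iff_card_eq_finrank_span.mpr
    have h2 : (Set.range M).finrank F ≤ t := by
      rw [← hcard]; exact finrank_range_le_card M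
    have h3 : t ≤ (Set.range M).finrank F := by
      rw [Set.finrank]; rw [Matrix.rank_eq_finrank_span_row] at hrk; exact hrk
    omega
  have hinj : Function.Injective (fun j : ↥J => (⟨↑j, hJJ₂ j.2⟩ : ↥J₂)) := by
    intro a b hab
    simp only [Subtype.mk.injEq] at hab
    exact Subtype.ext hab
  exact h1.comp _ hinj

/-- If `γ ∈ (0,1/2)` and `A`, `B` are `(γn, γn)`-rigid `n×n` matrices over a field, then
the Kronecker product `A ⊗ B` is `(γ²n², γ²n², γ²)`-rigid. -/
theorem stmt4 {F : Type*} [Field F] {n : ℕ} {γ : ℝ} (hγ0 : 0 < γ) (hγ1 : γ < 1 / 2)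
    (A B : Matrix (Fin n) (Fin n) F)
    (hA : Rigid A ⌈γ * (n : ℝ)⌉₊ ⌈γ * (n : ℝ)⌉₊ 1)
    (hB : Rigid B ⌈γ * (n : ℝ)⌉₊ ⌈γ * (n : ℝ)⌉₊ 1) :
    Rigid (A ⊗ₖ B) ⌈γ ^ 2 * (n : ℝ) ^ 2⌉₊ ⌈γ ^ 2 * (n : ℝ) ^ 2⌉₊ (γ ^ 2) := by
  classical
  intro U hU W hW
  set t := ⌈γ * (n : ℝ)⌉₊ with htdef
  set k := ⌈γ ^ 2 * (n : ℝ) ^ 2⌉₊ with hkdef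
  rcases Nat.eq_zero_or_pos n with hn | hn
  · exfalso
    have hk0 : k = 0 := by rw [hkdef, hn]; norm_num
    omega
  have hγ1' : γ ≤ 1 := le_of_lt (lt_trans hγ1 (by norm_num))
  have hnR : (0 : ℝ) < n := by exact_mod_cast hn
  have htn : t ≤ n := Nat.ceil_le.mpr (by nlinarith)
  have hγt : γ * n ≤ (t : ℝ) := Nat.le_ceil _
  have hγn0 : (0 : ℝ) ≤ γ * n := by positivity
  have hkt : k ≤ t * t := by
    apply Nat.ceil_le.mpr
    have h1 := mul_le_mul hγt hγt hγn0 (hγn0.trans hγt)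
    push_cast
    nlinarith
  -- fibers of W over first coordinate
  set Wfib : Fin n → Finset (Fin n) :=
    fun c => (W.filter (fun p => p.1 = c)).image Prod.snd with hWfib
  have hWfibmem : ∀ c d, d ∈ Wfib c ↔ (c, d) ∈ W := by
    intro c d
    simp only [hWfib, mem_image, mem_filter]
    constructor
    · rintro ⟨p, ⟨hpW, hp1⟩, hp2⟩
      rwa [← hp1, ← hp2, Prod.mk.eta]
    · intro h; exact ⟨(c, d), ⟨h, rfl⟩, rfl⟩
  set bad := univ.filter (fun c => t ≤ (Wfib c).card) with hbad
  have hbadcard : bad.card < t := by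
    by_contra hcon
    push_neg at hcon
    have h1 : bad.card * t ≤ ∑ c ∈ bad, (W.filter (fun p => p.1 = c)).card := by
      calc bad.card * t = ∑ _c ∈ bad, t := by rw [sum_const, smul_eq_mul]
        _ ≤ _ := sum_le_sum (fun c hc =>
            le_trans (mem_filter.mp hc).2 card_image_le)
    have h2 : ∑ c ∈ bad, (W.filter (fun p => p.1 = c)).card
        ≤ ∑ c ∈ univ, (W.filter (fun p => p.1 = c)).card :=
      sum_le_sum_of_subset (subset_univ bad)
    have h3 : ∑ c ∈ (univ : Finset (Fin n)), (W.filter (fun p => p.1 = c)).card = W.card :=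
      (card_eq_sum_card_fiberwise (fun x _ => mem_univ x.1)).symm
    have h4 : t * t ≤ W.card := by
      calc t * t ≤ bad.card * t := Nat.mul_le_mul_right t hcon
        _ ≤ W.card := by rw [← h3]; exact le_trans h1 h2
    have h5 : W.card < t * t := lt_of_lt_of_le hW hkt
    omega
  obtain ⟨S, J, hScard, hJcard, hSJ⟩ := select2d U t htn
  set P := U.filter (fun p => p.1 ∈ S ∧ p.2 ∈ J) with hPdef
  have hPU : P ⊆ U := filter_subset _ _
  -- lower bound on P.card
  have hPcard : ⌈γ ^ 2 * (k : ℝ)⌉₊ ≤ P.card := by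
    apply Nat.ceil_le.mpr
    rw [hU] at hSJ
    have hc : ((t : ℝ) * t * k ≤ (n : ℝ) * n * P.card) := by exact_mod_cast hSJ
    have h1 : γ ^ 2 * k * ((n : ℝ) * n) ≤ (t : ℝ) * t * k := by
      have h2 := mul_le_mul hγt hγt hγn0 (hγn0.trans hγt)
      nlinarith [Nat.cast_nonneg (α := ℝ) k]
    nlinarith [mul_pos hnR hnR]
  -- linear independence of the rows indexed by P
  have hindep : LinearIndependent F
      (fun p : ↥P => fun q : ↥(Wᶜ) => (A ⊗ₖ B) ↑p ↑q) := by
    rw [Fintype.linearIndependent_iff]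
    intro g hg
    set G : Fin n × Fin n → F := fun p => if h : p ∈ P then g ⟨p, h⟩ else 0 with hG
    have hGg : ∀ p : ↥P, G ↑p = g p := fun p => dif_pos p.2
    have hg' : ∀ q : ↥(Wᶜ),
        ∑ p ∈ P, G p * (A p.1 (↑q : Fin n × Fin n).1 * B p.2 (↑q : Fin n × Fin n).2) = 0 := by
      intro q
      have h0 := congrFun hg q
      simp only [Finset.sum_apply, Pi.smul_apply, smul_eq_mul, Pi.zero_apply] at h0
      rw [← Finset.sum_coe_sort P
        (fun p => G p * (A p.1 (↑q : Fin n × Fin n).1 * B p.2 (↑q : Fin n × Fin n).2))]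
      rw [← h0]
      apply sum_congr rfl
      intro p _
      rw [hGg p]
      rfl
    -- coefficients vanish per good column of A
    have hmu : ∀ c : Fin n, c ∉ bad → ∀ j ∈ J,
        ∑ p ∈ P.filter (fun p => p.2 = j), G p * A p.1 c = 0 := by
      intro c hc
      have hWc : (Wfib c).card < t := by
        by_contra h
        push_neg at h
        exact hc (mem_filter.mpr ⟨mem_univ c, h⟩)
      have hBind := rigid_rows_indep B hB htn J (le_of_eq hJcard) (Wfib c) hWc
      have key : ∑ j : ↥J,
          (∑ p ∈ P.filter (fun p => p.2 = ↑j), G p * A p.1 c)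
            • (fun d : ↥((Wfib c)ᶜ) => B ↑j ↑d) = 0 := by
        funext d
        have hdW : ((c, (d : Fin n)) : Fin n × Fin n) ∈ Wᶜ := by
          rw [Finset.mem_compl]
          intro hmem
          exact (Finset.mem_compl.mp d.2) ((hWfibmem c ↑d).mpr hmem)
        have h0 := hg' ⟨(c, ↑d), hdW⟩
        rw [← Finset.sum_fiberwise_of_maps_to (g := fun p : Fin n × Fin n => p.2) (t := J)
          (fun p hp => (mem_filter.mp hp).2.2)
          (fun p => G p * (A p.1 c * B p.2 ↑d))] at h0
        simp only [Finset.sum_apply, Pi.smul_apply, smul_eq_mul, Pi.zero_apply]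
        rw [Finset.sum_coe_sort J
          (fun j => (∑ p ∈ P.filter (fun p => p.2 = j), G p * A p.1 c) * B j ↑d)]
        rw [← h0]
        apply sum_congr rfl
        intro j hj
        rw [Finset.sum_mul]
        apply sum_congr rfl
        intro p hp
        have hp2 : p.2 = j := (mem_filter.mp hp).2
        rw [hp2]
        ring
      have hz := Fintype.linearIndependent_iff.mp hBind _ key
      intro j hj
      exact hz ⟨j, hj⟩
    -- now conclude all coefficients vanish using rigidity of A
    have hzero : ∀ p ∈ P, G p = 0 := by
      intro p hp
      have hpJ : p.2 ∈ J := (mem_filter.mp hp).2.2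
      set Sj := (P.filter (fun r => r.2 = p.2)).image Prod.fst with hSj
      have hSjS : Sj ⊆ S := by
        intro i hi
        obtain ⟨r, hr, hri⟩ := mem_image.mp hi
        exact hri ▸ (mem_filter.mp (mem_filter.mp hr).1).2.1
      have hSjcard : Sj.card ≤ t := le_trans (card_le_card hSjS) (le_of_eq hScard)
      have hAind := rigid_rows_indep A hA htn Sj hSjcard bad hbadcard
      have key2 : ∑ i : ↥Sj,
          G (↑i, p.2) • (fun c : ↥(badᶜ) => A ↑i ↑c) = 0 := by
        funext c
        simp only [Finset.sum_apply, Pi.smul_apply, smul_eq_mul, Pi.zero_apply]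
        rw [Finset.sum_coe_sort Sj (fun i => G (i, p.2) * A i ↑c)]
        have hcb : (↑c : Fin n) ∉ bad := mem_compl.mp c.2
        have h0 := hmu ↑c hcb p.2 hpJ
        rw [← h0, hSj]
        rw [Finset.sum_image (fun x hx y hy hxy => by
          have hx2 : x.2 = p.2 := (mem_filter.mp hx).2
          have hy2 : y.2 = p.2 := (mem_filter.mp hy).2
          exact Prod.ext hxy (hx2.trans hy2.symm))]
        apply sum_congr rfl
        intro r hr
        have hr2 : r.2 = p.2 := (mem_filter.mp hr).2
        rw [show ((r.1, p.2) : Fin n × Fin n) = r from Prod.ext rfl hr2.symm]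
      have hz2 := Fintype.linearIndependent_iff.mp hAind _ key2
      have hpSj : p.1 ∈ Sj := mem_image.mpr ⟨p, mem_filter.mpr ⟨hp, rfl⟩, rfl⟩
      have h3 := hz2 ⟨p.1, hpSj⟩
      rwa [show ((p.1, p.2) : Fin n × Fin n) = p from Prod.ext rfl rfl] at h3
    intro p
    rw [← hGg p]
    exact hzero ↑p p.2
  -- rank lower bound from linear independence
  have hrankP : P.card ≤
      ((A ⊗ₖ B).submatrix (fun i : ↥U => (i : Fin n × Fin n))
        (fun q : ↥(Wᶜ) => (q : Fin n × Fin n))).rank := by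
    rw [Matrix.rank_eq_finrank_span_row]
    have hsub : Set.range (fun p : ↥P => fun q : ↥(Wᶜ) => (A ⊗ₖ B) ↑p ↑q) ⊆
        Set.range ((A ⊗ₖ B).submatrix (fun i : ↥U => (i : Fin n × Fin n))
          (fun q : ↥(Wᶜ) => (q : Fin n × Fin n))) := by
      rintro v ⟨p, rfl⟩
      exact ⟨⟨↑p, hPU p.2⟩, rfl⟩
    have h1 : P.card =
        (Set.range (fun p : ↥P => fun q : ↥(Wᶜ) => (A ⊗ₖ B) ↑p ↑q)).finrank F := by
      rw [← linearIndependent_iff_card_eq_finrank_span.mp hindep, Fintype.card_coe]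
    rw [h1, Set.finrank]
    exact Submodule.finrank_mono (Submodule.span_mono hsub)
  exact le_trans hPcard (le_trans hrankP le_rfl)
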